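/- Let G be a finite group, i an involution in G, and N a normal subgroup of G such that the centralizer of the coset iN in the quotient group G/N has the same order as the centralizer C_G(i). Then every element of N has the form i·(g⁻¹·i·g) for some g ∈ G; consequently every conjugate of i inverts every element of N, the subgroup N centralizes the set i·i^G = {i·(g⁻¹·i·g) : g ∈ G}, and N is contained in the center of the subgroup [i,G]. -/
import Mathlib

open MulAction Subgroup

lemma aux_orbit_card {G : Type*} [Group G] [Finite G] (i : G) :
    Nat.card (orbit (ConjAct G) i) * Nat.card (Subgroup.centralizer ({i} : Set G)) =
      Nat.card G := by
  classical
  have := Fintype.ofFinite G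
  have : Fintype (ConjAct G) := Fintype.ofFinite _
  have : Fintype (orbit (ConjAct G) i) := Fintype.ofFinite _
  have : Fintype (stabilizer (ConjAct G) i) := Fintype.ofFinite _
  rw [Subgroup.nat_card_centralizer_nat_card_stabilizer]
  simp only [Nat.card_eq_fintype_card]
  rw [MulAction.card_orbit_mul_card_stabilizer_eq_card_group (ConjAct G) i]
  exact (Fintype.card_congr ConjAct.ofConjAct.toEquiv)

lemma aux_coset_sub_class {G : Type*} [Group G] [Finite G]
    (i : G) (N : Subgroup G) [N.Normal]
    (hcard : Nat.card (Subgroup.centralizer ({(QuotientGroup.mk i : G ⧸ N)} : Set (G ⧸ N))) =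
      Nat.card (Subgroup.centralizer ({i} : Set G))) :
    ∀ x ∈ N, ∃ g : G, i * x = g * i * g⁻¹ := by
  classical
  set CQ : Set (G ⧸ N) := orbit (ConjAct (G ⧸ N)) ((i : G) : G ⧸ N) with hCQ
  set P : Set G := QuotientGroup.mk ⁻¹' CQ with hP
  have hsub : orbit (ConjAct G) i ⊆ P := by
    rintro _ ⟨g, rfl⟩
    show (QuotientGroup.mk _ : G ⧸ N) ∈ CQ
    refine ⟨ConjAct.toConjAct ((ConjAct.ofConjAct g : G) : G ⧸ N), ?_⟩
    simp [ConjAct.smul_def]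
  have hcardP : Nat.card P = Nat.card N * Nat.card CQ := by
    rw [hP, Nat.card_congr (QuotientGroup.preimageMkEquivSubgroupProdSet N CQ), Nat.card_prod]
  have hG : Nat.card G = Nat.card (G ⧸ N) * Nat.card N :=
    Subgroup.card_eq_card_quotient_mul_card_subgroup N
  have h1 := aux_orbit_card i
  have h2 := aux_orbit_card ((i : G) : G ⧸ N)
  have hc0 : 0 < Nat.card (Subgroup.centralizer ({i} : Set G)) := Nat.card_pos
  have hcards : Nat.card (orbit (ConjAct G) i) = Nat.card P := by
    rw [hcardP]
    apply Nat.eq_of_mul_eq_mul_right hc0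
    rw [h1, hG, ← h2, hcard]
    ring
  have heq : orbit (ConjAct G) i = P := by
    apply Set.eq_of_subset_of_ncard_le hsub _ (Set.toFinite _)
    rw [← Nat.card_coe_set_eq, ← Nat.card_coe_set_eq, hcards]
  intro x hx
  have hmem : (i * x : G) ∈ orbit (ConjAct G) i := by
    rw [heq]
    show (QuotientGroup.mk (i * x) : G ⧸ N) ∈ CQ
    have : (QuotientGroup.mk (i * x) : G ⧸ N) = (i : G ⧸ N) := by
      rw [QuotientGroup.mk_mul, (QuotientGroup.eq_one_iff x).2 hx, mul_one]
    rw [this]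
    exact mem_orbit_self _
  obtain ⟨g, hg⟩ := hmem
  exact ⟨ConjAct.ofConjAct g, by rw [← hg]; exact ConjAct.smul_def g i⟩

/-- Let `G` be a finite group, `i` an involution and `N` a normal subgroup such that the
centralizer of `iN` in `G/N` has the same order as `C_G(i)`. Then every element of `N` has
the form `i * i^g`, every conjugate of `i` inverts every element of `N`, the subgroup `N`
centralizes the set `i * i^G`, and `N` lies in the center of the subgroup `[i, G]`. -/
theorem normal_subgroup_of_equal_centralizer_card {G : Type*} [Group G] [Finite G]
    (i : G) (hi1 : i ≠ 1) (hi2 : i ^ 2 = 1) (N : Subgroup G) [N.Normal]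
    (hcard : Nat.card (Subgroup.centralizer ({(QuotientGroup.mk i : G ⧸ N)} : Set (G ⧸ N))) =
      Nat.card (Subgroup.centralizer ({i} : Set G))) :
    (∀ x ∈ N, ∃ g : G, x = i * (g⁻¹ * i * g)) ∧
    (∀ x ∈ N, ∀ g : G, (g⁻¹ * i * g) * x * (g⁻¹ * i * g)⁻¹ = x⁻¹) ∧
    (∀ x ∈ N, ∀ g : G, Commute x (i * (g⁻¹ * i * g))) ∧
    (∀ x ∈ N, x ∈ Subgroup.closure {y : G | ∃ g : G, i⁻¹ * g⁻¹ * i * g = y} ∧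
      ∀ y ∈ Subgroup.closure {y : G | ∃ g : G, i⁻¹ * g⁻¹ * i * g = y}, Commute x y) := by
  have hii : i * i = 1 := by rw [← pow_two]; exact hi2
  have hinv : i⁻¹ = i := inv_eq_of_mul_eq_one_right hii
  have hii' : ∀ y : G, i * (i * y) = y := fun y => by rw [← mul_assoc, hii, one_mul]
  -- part 1
  have part1 : ∀ x ∈ N, ∃ g : G, x = i * (g⁻¹ * i * g) := by
    intro x hx
    obtain ⟨g, hg⟩ := aux_coset_sub_class i N hcard x hx
    refine ⟨g⁻¹, ?_⟩
    rw [inv_inv, ← hg, hii']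
  -- i inverts every element of N
  have hinvert : ∀ x ∈ N, i * x * i⁻¹ = x⁻¹ := by
    intro x hx
    obtain ⟨g, hg⟩ := part1 x hx
    have hj : (g⁻¹ * i * g) * (g⁻¹ * i * g) = 1 := by
      have : (g⁻¹ * i * g) * (g⁻¹ * i * g) = g⁻¹ * (i * i) * g := by group
      rw [this, hii]; group
    have hj' : (g⁻¹ * i * g)⁻¹ = g⁻¹ * i * g := inv_eq_of_mul_eq_one_right hj
    rw [hg, hinv, mul_inv_rev, hinv, hj', hii']
  -- part 2
  have part2 : ∀ x ∈ N, ∀ g : G, (g⁻¹ * i * g) * x * (g⁻¹ * i * g)⁻¹ = x⁻¹ := by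
    intro x hx g
    have hx' : g * x * g⁻¹ ∈ N := Subgroup.Normal.conj_mem ‹N.Normal› x hx g
    have h := hinvert _ hx'
    have : (g⁻¹ * i * g) * x * (g⁻¹ * i * g)⁻¹ = g⁻¹ * (i * (g * x * g⁻¹) * i⁻¹) * g := by
      group
    rw [this, h]
    group
  -- part 3
  have part3 : ∀ x ∈ N, ∀ g : G, Commute x (i * (g⁻¹ * i * g)) := by
    intro x hx g
    have hxi : x * i = i * x⁻¹ := by
      have h1 : i * x⁻¹ * i⁻¹ = x := by rw [hinvert x⁻¹ (inv_mem hx), inv_inv]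
      conv_lhs => rw [← h1]
      group
    have hjx : (g⁻¹ * i * g) * x = x⁻¹ * (g⁻¹ * i * g) := by
      rw [← part2 x hx g]; group
    show x * (i * (g⁻¹ * i * g)) = (i * (g⁻¹ * i * g)) * x
    calc x * (i * (g⁻¹ * i * g)) = (x * i) * (g⁻¹ * i * g) := by rw [← mul_assoc]
      _ = i * (x⁻¹ * (g⁻¹ * i * g)) := by rw [hxi, mul_assoc]
      _ = i * ((g⁻¹ * i * g) * x) := by rw [hjx]
      _ = (i * (g⁻¹ * i * g)) * x := by rw [← mul_assoc]
  refine ⟨part1, part2, part3, ?_⟩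
  intro x hx
  constructor
  · obtain ⟨g, hg⟩ := part1 x hx
    apply Subgroup.subset_closure
    refine ⟨g, ?_⟩
    rw [hg, hinv]; group
  · intro y hy
    induction hy using Subgroup.closure_induction with
    | mem z hz =>
      obtain ⟨g, rfl⟩ := hz
      have : i⁻¹ * g⁻¹ * i * g = i * (g⁻¹ * i * g) := by rw [hinv]; group
      rw [this]
      exact part3 x hx g
    | one => exact Commute.one_right x
    | mul a b _ _ ha hb => exact Commute.mul_right ha hb
    | inv a _ ha => exact Commute.inv_right ha
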